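/- For all real x in (0, 1), (1 - x)^(-1/x) ≥ e·(1 + x/2). -/

import Mathlib

open Real

lemma log_key (x : ℝ) (h0 : 0 < x) (h1 : x < 1) :
    x + x ^ 2 / 2 ≤ -Real.log (1 - x) := by
  set f : ℝ → ℝ := fun t => -Real.log (1 - t) - t - t ^ 2 / 2 with hf
  have hderiv : ∀ t ∈ Set.Ico (0:ℝ) 1, HasDerivAt f (t ^ 2 / (1 - t)) t := by
    intro t ht
    have htne : (1 - t) ≠ 0 := by
      have : t < 1 := ht.2
      linarith
    have h1' : HasDerivAt (fun t : ℝ => 1 - t) (-1) t := by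
      simpa using (hasDerivAt_id t).const_sub 1
    have hlog : HasDerivAt (fun t : ℝ => Real.log (1 - t)) (-1 / (1 - t)) t := by
      have := (Real.hasDerivAt_log htne).comp t h1'
      simp only [Function.comp_def] at this
      rw [show -1 / (1 - t) = (1 - t)⁻¹ * -1 by ring]
      exact this
    have : HasDerivAt f (-(-1 / (1 - t)) - 1 - ((2:ℕ) * t ^ (2-1) / 2)) t :=
      ((hlog.neg.sub (hasDerivAt_id t)).sub (((hasDerivAt_pow 2 t)).div_const 2))
    norm_num at this
    convert this using 1
    have : t < 1 := ht.2
    field_simp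
    ring
  have hmono : MonotoneOn f (Set.Ico (0:ℝ) 1) := by
    apply monotoneOn_of_deriv_nonneg (convex_Ico 0 1)
    · apply ContinuousOn.sub
      apply ContinuousOn.sub
      · apply ContinuousOn.neg
        apply Real.continuousOn_log.comp (by fun_prop)
        intro t ht
        simp only [Set.mem_Ico] at ht
        simp only [Set.mem_compl_iff, Set.mem_singleton_iff]
        intro h; linarith [ht.2]
      · fun_prop
      · fun_prop
    · intro t ht
      rw [interior_Ico] at ht
      exact ((hderiv t ⟨le_of_lt ht.1, ht.2⟩).differentiableAt).differentiableWithinAt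
    · intro t ht
      rw [interior_Ico] at ht
      rw [(hderiv t ⟨le_of_lt ht.1, ht.2⟩).deriv]
      have : 0 < 1 - t := by linarith [ht.2]
      positivity
  have h0mem : (0:ℝ) ∈ Set.Ico (0:ℝ) 1 := by constructor <;> norm_num
  have hxmem : x ∈ Set.Ico (0:ℝ) 1 := ⟨le_of_lt h0, h1⟩
  have := hmono h0mem hxmem (le_of_lt h0)
  simp only [hf, Real.log_one, sub_zero] at this
  norm_num at this
  linarith

theorem stmt17 (x : ℝ) (h0 : 0 < x) (h1 : x < 1) :
    (1 - x) ^ (-1 / x) ≥ Real.exp 1 * (1 + x / 2) := by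
  have hx1 : (0:ℝ) < 1 - x := by linarith
  rw [Real.rpow_def_of_pos hx1]
  have hkey := log_key x h0 h1
  have h2 : 1 + x / 2 ≤ -1 / x * Real.log (1 - x) := by
    rw [div_mul_eq_mul_div, le_div_iff₀ h0]
    nlinarith
  have h3 : Real.exp 1 * (1 + x / 2) ≤ Real.exp 1 * Real.exp (x / 2) := by
    apply mul_le_mul_of_nonneg_left _ (le_of_lt (Real.exp_pos 1))
    linarith [Real.add_one_le_exp (x / 2)]
  rw [mul_comm]
  calc Real.exp 1 * (1 + x / 2) ≤ Real.exp 1 * Real.exp (x / 2) := h3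
    _ = Real.exp (1 + x / 2) := (Real.exp_add 1 (x/2)).symm
    _ ≤ Real.exp (-1 / x * Real.log (1 - x)) := Real.exp_le_exp.mpr h2
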